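/- Let Ω ⊂ ℝⁿ be a bounded domain, F : Ω × ℝ → ℝ a Carathéodory function with F(x,0) = 0, satisfying the growth condition |F(x,ξ)| ≤ C(1 + |ξ|^{q+1}) with q subcritical, and suppose limsup_{|ξ|→+∞} sup_{x∈Ω} F(x,ξ)/ξ² ≤ 0. Then the functional J_F(u) = ∫_Ω F(x, u(x)) dx on H¹₀(Ω) satisfies limsup_{‖u‖→+∞} J_F(u)/‖u‖² ≤ 0, where ‖u‖² = ∫_Ω |∇u|² dx. -/

import Mathlib

open MeasureTheory ENNReal Module Function
open scoped NNReal

lemma poincare_aux {n : ℕ} (hn : 2 ≤ n) (Ω : Set (EuclideanSpace ℝ (Fin n)))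
    (hΩbdd : Bornology.IsBounded Ω) :
    ∃ K : ℝ, 0 ≤ K ∧ ∀ u : EuclideanSpace ℝ (Fin n) → ℝ, ContDiff ℝ 1 u → tsupport u ⊆ Ω →
      (∫ x in Ω, (u x) ^ 2) ≤ K * ∫ x in Ω, ‖fderiv ℝ u x‖ ^ 2 := by
  have hn0 : (0:ℝ) < n := by positivity
  have hn0' : (0:ℝ) < (n:ℝ) + 2 := by positivity
  have hn2 : (2:ℝ) ≤ n := by exact_mod_cast hn
  set p : ℝ≥0 := ⟨2 * n / (n + 2), by positivity⟩ with hp_def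
  have hpR : (p : ℝ) = 2 * (n:ℝ) / ((n:ℝ) + 2) := rfl
  have hfr : finrank ℝ (EuclideanSpace ℝ (Fin n)) = n := finrank_euclideanSpace_fin
  have hp1 : 1 ≤ p := by
    rw [← NNReal.coe_le_coe, hpR, NNReal.coe_one, le_div_iff₀ hn0']; nlinarith
  have hp2 : p ≤ 2 := by
    rw [← NNReal.coe_le_coe, hpR, div_le_iff₀ hn0']; push_cast; nlinarith
  have hpn : p < (finrank ℝ (EuclideanSpace ℝ (Fin n)) : ℝ≥0) := by
    rw [hfr, ← NNReal.coe_lt_coe, hpR, NNReal.coe_natCast, div_lt_iff₀ hn0']; nlinarith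
  have hne : (n:ℝ) ≠ 0 := ne_of_gt hn0
  have hpq : (p : ℝ)⁻¹ - ((finrank ℝ (EuclideanSpace ℝ (Fin n))) : ℝ)⁻¹ ≤ ((2 : ℝ≥0) : ℝ)⁻¹ := by
    rw [hfr, hpR]
    have h2 : ((2 : ℝ≥0) : ℝ) = 2 := rfl
    rw [h2, inv_div]
    have e : ((n:ℝ) + 2) / (2 * (n:ℝ)) - ((n:ℝ))⁻¹ = 2⁻¹ := by field_simp; ring
    rw [e]
  have hp0 : (p : ℝ) ≠ 0 := by
    have := hp1; rw [← NNReal.coe_le_coe, NNReal.coe_one] at this; linarith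
  -- the constant
  set C1 : ℝ≥0∞ := (eLpNormLESNormFDerivOfLeConst ℝ (volume : Measure (EuclideanSpace ℝ (Fin n))) Ω p 2 : ℝ≥0∞) with hC1
  have hμΩ : volume Ω ≠ ∞ := hΩbdd.measure_lt_top.ne
  set θ : ℝ := 1 / (p:ℝ) - 1 / 2 with hθ
  have hp0' : (0:ℝ) < (p:ℝ) := by rw [hpR]; positivity
  have hθ0 : 0 ≤ θ := by
    rw [hθ, sub_nonneg, div_le_div_iff₀ (by norm_num) hp0']
    rw [← NNReal.coe_le_coe] at hp2
    push_cast at hp2 ⊢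
    linarith
  set m : ℝ≥0∞ := (volume Ω) ^ θ with hm
  have hm_ne : m ≠ ∞ := by
    exact ENNReal.rpow_ne_top_of_nonneg hθ0 hμΩ
  set K₁ : ℝ≥0∞ := C1 * m with hK₁
  have hK₁ne : K₁ ≠ ∞ := ENNReal.mul_ne_top ENNReal.coe_ne_top hm_ne
  refine ⟨(K₁ ^ (2:ℝ)).toReal, ENNReal.toReal_nonneg, ?_⟩
  intro u hu hsupp
  have hcs : HasCompactSupport u := by
    have : Bornology.IsBounded (tsupport u) := hΩbdd.subset hsupp
    exact Metric.isCompact_of_isClosed_isBounded (isClosed_tsupport u) this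
  have hsupp' : Function.support u ⊆ Ω := (subset_tsupport u).trans hsupp
  have hsuppd : Function.support (fderiv ℝ u) ⊆ Ω := (support_fderiv_subset ℝ).trans hsupp
  have hcont := hu.continuous
  have hcontd : Continuous (fderiv ℝ u) := hu.continuous_fderiv one_ne_zero
  -- Sobolev inequality
  have step1 : eLpNorm u 2 volume ≤ C1 * eLpNorm (fderiv ℝ u) p volume :=
    eLpNorm_le_eLpNorm_fderiv_of_le volume hu hsupp' hp1 hpn hpq hΩbdd
  have step2 : eLpNorm (fderiv ℝ u) p volume = eLpNorm (fderiv ℝ u) p (volume.restrict Ω) :=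
    (eLpNorm_restrict_eq_of_support_subset (f := fderiv ℝ u) (by exact hsuppd)).symm
  have step3 : eLpNorm (fderiv ℝ u) p (volume.restrict Ω)
      ≤ eLpNorm (fderiv ℝ u) 2 (volume.restrict Ω) * m := by
    have h := eLpNorm_le_eLpNorm_mul_rpow_measure_univ (μ := volume.restrict Ω)
      (p := (p : ℝ≥0∞)) (q := 2) (by exact_mod_cast hp2) hcontd.aestronglyMeasurable
    rwa [Measure.restrict_apply_univ, ENNReal.coe_toReal, ENNReal.toReal_ofNat, ← hθ, ← hm] at h
  set A := eLpNorm u 2 (volume.restrict Ω) with hA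
  set B := eLpNorm (fderiv ℝ u) 2 (volume.restrict Ω) with hB
  have hAB : A ≤ K₁ * B := by
    calc A ≤ eLpNorm u 2 volume := eLpNorm_mono_measure _ Measure.restrict_le_self
    _ ≤ C1 * eLpNorm (fderiv ℝ u) p volume := step1
    _ = C1 * eLpNorm (fderiv ℝ u) p (volume.restrict Ω) := by rw [step2]
    _ ≤ C1 * (B * m) := by gcongr
    _ = K₁ * B := by rw [hK₁]; ring
  have hBne : B ≠ ∞ := by
    have : eLpNorm (fderiv ℝ u) 2 volume < ∞ :=
      (hcontd.memLp_of_hasCompactSupport (p := 2) (μ := volume) (hcs.fderiv (𝕜 := ℝ))).eLpNorm_lt_top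
    exact ((eLpNorm_mono_measure _ Measure.restrict_le_self).trans_lt this).ne
  -- square
  set LU : ℝ≥0∞ := ∫⁻ x in Ω, (‖u x‖₊ : ℝ≥0∞) ^ (2:ℝ) with hLU
  set LD : ℝ≥0∞ := ∫⁻ x in Ω, (‖fderiv ℝ u x‖₊ : ℝ≥0∞) ^ (2:ℝ) with hLD
  have h2t : (2:ℝ≥0∞).toReal = (2:ℝ) := by norm_num
  have hA' : A = LU ^ (1/(2:ℝ)) := by
    rw [hA, hLU, eLpNorm_eq_lintegral_rpow_enorm_toReal (by norm_num) (by norm_num), h2t]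
    rfl
  have hB' : B = LD ^ (1/(2:ℝ)) := by
    rw [hB, hLD, eLpNorm_eq_lintegral_rpow_enorm_toReal (by norm_num) (by norm_num), h2t]
    rfl
  have hLUeq : LU = A ^ (2:ℝ) := by
    rw [hA', ← ENNReal.rpow_mul]; norm_num
  have hLDeq : LD = B ^ (2:ℝ) := by
    rw [hB', ← ENNReal.rpow_mul]; norm_num
  have hLDne : LD ≠ ∞ := by
    rw [hLDeq]; exact ENNReal.rpow_ne_top_of_nonneg (by norm_num) hBne
  have key : LU ≤ K₁ ^ (2:ℝ) * LD := by
    rw [hLUeq, hLDeq, ← ENNReal.mul_rpow_of_nonneg _ _ (by norm_num)]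
    exact ENNReal.rpow_le_rpow hAB (by norm_num)
  have hRHSne : K₁ ^ (2:ℝ) * LD ≠ ∞ :=
    ENNReal.mul_ne_top (ENNReal.rpow_ne_top_of_nonneg (by norm_num) hK₁ne) hLDne
  have keyR : LU.toReal ≤ (K₁ ^ (2:ℝ)).toReal * LD.toReal := by
    rw [← ENNReal.toReal_mul]
    exact ENNReal.toReal_mono hRHSne key
  -- identify the real integrals
  have hptw : ∀ x, ENNReal.ofReal (‖u x‖ ^ 2) = (‖u x‖₊ : ℝ≥0∞) ^ (2:ℝ) := by
    intro x
    rw [ENNReal.ofReal_pow (norm_nonneg _), ofReal_norm, ← ENNReal.rpow_natCast]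
    norm_num
    rfl
  have hptw2 : ∀ x, ENNReal.ofReal (‖fderiv ℝ u x‖ ^ 2)
      = (‖fderiv ℝ u x‖₊ : ℝ≥0∞) ^ (2:ℝ) := by
    intro x
    rw [ENNReal.ofReal_pow (norm_nonneg _), ofReal_norm, ← ENNReal.rpow_natCast]
    norm_num
    rfl
  have hLUr : (∫ x in Ω, (u x) ^ 2) = LU.toReal := by
    have e : ∀ x, (u x) ^ 2 = ‖u x‖ ^ 2 := fun x => by rw [Real.norm_eq_abs, sq_abs]
    simp_rw [e]
    rw [integral_eq_lintegral_of_nonneg_ae (f := fun x => ‖u x‖ ^ 2) (ae_of_all _ (fun x => by positivity))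
      ((hcont.norm.pow 2).aestronglyMeasurable), hLU]
    congr 1
    exact lintegral_congr (fun x => hptw x)
  have hLDr : (∫ x in Ω, ‖fderiv ℝ u x‖ ^ 2) = LD.toReal := by
    rw [integral_eq_lintegral_of_nonneg_ae (f := fun x => ‖fderiv ℝ u x‖ ^ 2) (ae_of_all _ (fun x => by positivity))
      ((hcontd.norm.pow 2).aestronglyMeasurable), hLD]
    congr 1
    exact lintegral_congr (fun x => hptw2 x)
  rw [hLUr, hLDr]
  exact keyR

theorem stmt_6 {n : ℕ} (hn : 2 ≤ n)
    (Ω : Set (EuclideanSpace ℝ (Fin n))) (hΩopen : IsOpen Ω)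
    (hΩbdd : Bornology.IsBounded Ω)
    (F : EuclideanSpace ℝ (Fin n) → ℝ → ℝ)
    (hFmeas : ∀ ξ : ℝ, Measurable (fun x => F x ξ))
    (hFcont : ∀ x, Continuous (F x))
    (hF0 : ∀ x, F x 0 = 0)
    (q C : ℝ) (hq : 0 < q) (hqsub : 2 < n → q < ((n : ℝ) + 2) / ((n : ℝ) - 2))
    (hgrowth : ∀ x ∈ Ω, ∀ ξ : ℝ, |F x ξ| ≤ C * (1 + |ξ| ^ (q + 1)))
    (hlimsup : ∀ ε > (0 : ℝ), ∃ M : ℝ, ∀ ξ : ℝ, M < |ξ| → ∀ x ∈ Ω, F x ξ ≤ ε * ξ ^ 2) :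
    ∀ ε > (0 : ℝ), ∃ R : ℝ, ∀ u : EuclideanSpace ℝ (Fin n) → ℝ,
      ContDiff ℝ 1 u → tsupport u ⊆ Ω →
      R < Real.sqrt (∫ x in Ω, ‖fderiv ℝ u x‖ ^ 2) →
      (∫ x in Ω, F x (u x)) ≤ ε * (∫ x in Ω, ‖fderiv ℝ u x‖ ^ 2) := by
  intro ε hε
  obtain ⟨K, hK0, hK⟩ := poincare_aux hn Ω hΩbdd
  have hΩmeas : MeasurableSet Ω := hΩopen.measurableSet
  have hμΩ : volume Ω ≠ ∞ := hΩbdd.measure_lt_top.ne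
  set ε' : ℝ := ε / (2 * (K + 1)) with hε'
  have hε'pos : 0 < ε' := by positivity
  obtain ⟨M, hM⟩ := hlimsup ε' hε'pos
  set M' : ℝ := max M 1 with hM'
  have hM'1 : (1:ℝ) ≤ M' := le_max_right _ _
  have hM'0 : (0:ℝ) ≤ M' := by linarith
  set D : ℝ := max C 0 with hD
  have hD0 : 0 ≤ D := le_max_right _ _
  set c0 : ℝ := D * (1 + M' ^ (q + 1)) with hc0
  have hc00 : 0 ≤ c0 := by
    apply mul_nonneg hD0
    have := Real.rpow_nonneg hM'0 (q + 1)
    linarith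
  set B' : ℝ := c0 * (volume Ω).toReal with hB'
  have hB'0 : 0 ≤ B' := mul_nonneg hc00 ENNReal.toReal_nonneg
  refine ⟨Real.sqrt (2 * B' / ε), ?_⟩
  intro u hu hsupp hR
  set I : ℝ := ∫ x in Ω, ‖fderiv ℝ u x‖ ^ 2 with hI
  have hI0 : 0 ≤ I := by
    apply integral_nonneg
    intro x; positivity
  -- measurability of x ↦ F x (u x)
  have hFjoint : Measurable (Function.uncurry fun (ξ : ℝ) (x : EuclideanSpace ℝ (Fin n)) => F x ξ) :=
    measurable_uncurry_of_continuous_of_measurable (fun x => hFcont x) hFmeas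
  have hgm : Measurable (fun x => F x (u x)) := by
    have : (fun x => F x (u x)) =
        (Function.uncurry fun (ξ : ℝ) (x : EuclideanSpace ℝ (Fin n)) => F x ξ) ∘
          (fun x => (u x, x)) := rfl
    rw [this]
    exact hFjoint.comp ((hu.continuous.measurable).prodMk measurable_id)
  -- boundedness of u
  have hcs : HasCompactSupport u :=
    Metric.isCompact_of_isClosed_isBounded (isClosed_tsupport u) (hΩbdd.subset hsupp)
  obtain ⟨T, hT⟩ := hcs.exists_bound_of_continuous hu.continuous
  set T' : ℝ := max T 0 with hT'
  have hT'0 : 0 ≤ T' := le_max_right _ _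
  have hT'b : ∀ x, |u x| ≤ T' := fun x => (Real.norm_eq_abs (u x) ▸ hT x).trans (le_max_left _ _)
  -- integrability
  have hintg : IntegrableOn (fun x => F x (u x)) Ω volume := by
    apply Measure.integrableOn_of_bounded hμΩ hgm.aestronglyMeasurable
      (M := D * (1 + T' ^ (q + 1)))
    rw [ae_restrict_iff' hΩmeas]
    refine ae_of_all _ (fun x hx => ?_)
    rw [Real.norm_eq_abs]
    calc |F x (u x)| ≤ C * (1 + |u x| ^ (q + 1)) := hgrowth x hx (u x)
    _ ≤ D * (1 + |u x| ^ (q + 1)) := by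
        apply mul_le_mul_of_nonneg_right (le_max_left _ _)
        have := Real.rpow_nonneg (abs_nonneg (u x)) (q + 1)
        linarith
    _ ≤ D * (1 + T' ^ (q + 1)) := by
        apply mul_le_mul_of_nonneg_left _ hD0
        have : |u x| ^ (q + 1) ≤ T' ^ (q + 1) :=
          Real.rpow_le_rpow (abs_nonneg _) (hT'b x) (by linarith)
        linarith
  have hintu2 : IntegrableOn (fun x => (u x) ^ 2) Ω volume := by
    apply Measure.integrableOn_of_bounded hμΩ ((hu.continuous.pow 2).aestronglyMeasurable)
      (M := T' ^ 2)
    refine ae_of_all _ (fun x => ?_)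
    rw [Real.norm_eq_abs, Pi.pow_apply, abs_pow]
    have := hT'b x
    nlinarith [abs_nonneg (u x)]
  have hintrhs : IntegrableOn (fun x => ε' * (u x) ^ 2 + c0) Ω volume :=
    (hintu2.const_mul ε').add (integrableOn_const hμΩ)
  -- pointwise bound
  have hptw : ∀ x ∈ Ω, F x (u x) ≤ ε' * (u x) ^ 2 + c0 := by
    intro x hx
    rcases le_or_gt (|u x|) M' with hcase | hcase
    · have h1 : F x (u x) ≤ D * (1 + M' ^ (q + 1)) := by
        calc F x (u x) ≤ |F x (u x)| := le_abs_self _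
        _ ≤ C * (1 + |u x| ^ (q + 1)) := hgrowth x hx (u x)
        _ ≤ D * (1 + |u x| ^ (q + 1)) := by
            apply mul_le_mul_of_nonneg_right (le_max_left _ _)
            have := Real.rpow_nonneg (abs_nonneg (u x)) (q + 1)
            linarith
        _ ≤ D * (1 + M' ^ (q + 1)) := by
            apply mul_le_mul_of_nonneg_left _ hD0
            have : |u x| ^ (q + 1) ≤ M' ^ (q + 1) :=
              Real.rpow_le_rpow (abs_nonneg _) hcase (by linarith)
            linarith
      have h2 : 0 ≤ ε' * (u x) ^ 2 := by positivity
      rw [← hc0] at h1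
      linarith
    · have h1 : F x (u x) ≤ ε' * (u x) ^ 2 :=
        hM (u x) (lt_of_le_of_lt (le_max_left M 1) hcase) x hx
      linarith
  -- integrate
  have hint1 : (∫ x in Ω, F x (u x)) ≤ ∫ x in Ω, (ε' * (u x) ^ 2 + c0) :=
    setIntegral_mono_on hintg hintrhs hΩmeas hptw
  have hint2 : (∫ x in Ω, (ε' * (u x) ^ 2 + c0)) = ε' * (∫ x in Ω, (u x) ^ 2) + B' := by
    rw [integral_add (hintu2.const_mul ε') (integrableOn_const hμΩ)]
    rw [integral_const_mul, setIntegral_const, smul_eq_mul, hB', measureReal_def]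
    ring
  have hpoin := hK u hu hsupp
  have hstep : (∫ x in Ω, F x (u x)) ≤ ε / 2 * I + B' := by
    have h3 : ε' * (∫ x in Ω, (u x) ^ 2) ≤ ε' * (K * I) :=
      mul_le_mul_of_nonneg_left hpoin (le_of_lt hε'pos)
    have h4 : ε' * (K * I) ≤ ε / 2 * I := by
      have : ε' * K ≤ ε / 2 := by
        rw [hε']
        rw [div_mul_eq_mul_div, div_le_div_iff₀ (by positivity) (by norm_num)]
        nlinarith
      nlinarith
    calc (∫ x in Ω, F x (u x)) ≤ ε' * (∫ x in Ω, (u x) ^ 2) + B' := by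
          rw [← hint2]; exact hint1
    _ ≤ ε / 2 * I + B' := by linarith
  -- R condition
  have hRB : B' ≤ ε / 2 * I := by
    have hIs : 2 * B' / ε ≤ I := by
      by_contra hcon
      push_neg at hcon
      have := Real.sqrt_le_sqrt (le_of_lt hcon)
      linarith
    calc B' = ε / 2 * (2 * B' / ε) := by field_simp
    _ ≤ ε / 2 * I := mul_le_mul_of_nonneg_left hIs (by positivity)
  linarith
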